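/- The order-reversing bijection θ of A induces an involutive anti-automorphism of the stylic monoid Styl(A). -/

import Mathlib

noncomputable section

open FreeMonoid

/-- The defining relations of the stylic congruence: the Knuth (plactic)
relations together with the idempotent relations `a² ≡ a`. -/
inductive StylicRel (A : Type*) [LinearOrder A] : FreeMonoid A → FreeMonoid A → Prop
  | knuth1 {a b c : A} : a < b → b < c →
      StylicRel A (ofList [b, a, c]) (ofList [b, c, a])
  | knuth2 {a b c : A} : a < b → b < c →
      StylicRel A (ofList [a, c, b]) (ofList [c, a, b])
  | knuth3 {a b : A} : a < b →
      StylicRel A (ofList [b, a, b]) (ofList [b, b, a])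
  | knuth4 {a b : A} : a < b →
      StylicRel A (ofList [a, b, a]) (ofList [b, a, a])
  | idem (a : A) : StylicRel A (ofList [a, a]) (ofList [a])

/-- The stylic congruence on the free monoid `A*`. -/
def stylCon (A : Type*) [LinearOrder A] : Con (FreeMonoid A) := conGen (StylicRel A)

/-- The stylic monoid `Styl(A)`. -/
abbrev Styl (A : Type*) [LinearOrder A] := (stylCon A).Quotient

open MulOpposite in
/-- the order-reversing bijection `θ` of `A` induces an
involutive anti-automorphism of the stylic monoid `Styl(A)`. -/
theorem theta_antiautomorphism {A : Type*} [LinearOrder A] [Fintype A]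
    (θ : A → A) (hθ : ∀ x y : A, x < y ↔ θ y < θ x) :
    ∃ φ : Styl A → Styl A,
      Function.Involutive φ ∧
      (∀ x y : Styl A, φ (x * y) = φ y * φ x) ∧
      φ 1 = 1 ∧
      (∀ a : A, φ ((stylCon A).mk' (FreeMonoid.of a)) =
        (stylCon A).mk' (FreeMonoid.of (θ a))) := by
  -- θ ∘ θ = id
  have hθθ : ∀ a : A, θ (θ a) = a := by
    have hsm : StrictMono (θ ∘ θ) := fun x y h => by
      simpa using (hθ (θ y) (θ x)).mp ((hθ x y).mp h)
    have hsurj : Function.Surjective (θ ∘ θ) :=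
      Finite.surjective_of_injective hsm.injective
    have h1 : hsm.orderIsoOfSurjective _ hsurj = OrderIso.refl A := Subsingleton.elim _ _
    intro a
    have := congrArg (fun e : A ≃o A => e a) h1
    exact this
  -- the anti-hom into the opposite monoid
  set F : FreeMonoid A →* (Styl A)ᵐᵒᵖ :=
    FreeMonoid.lift (fun a => op ((stylCon A).mk' (FreeMonoid.of (θ a)))) with hF
  have hFl : ∀ l : List A, F (ofList l) =
      op ((stylCon A).mk' (ofList ((l.map θ).reverse))) := by
    intro l
    induction l with
    | nil => simp [hF]
    | cons a t ih =>
      rw [show ofList (a :: t) = FreeMonoid.of a * ofList t from rfl, map_mul, ih,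
        show F (FreeMonoid.of a) = op ((stylCon A).mk' (FreeMonoid.of (θ a))) from rfl,
        ← op_mul, ← map_mul]
      have e : ofList ((t.map θ).reverse) * FreeMonoid.of (θ a)
          = ofList (((a :: t).map θ).reverse) := by
        show ofList ((t.map θ).reverse ++ [θ a]) = ofList (((a :: t).map θ).reverse)
        rw [List.map_cons, List.reverse_cons]
      rw [e]
  have key : ∀ x y, StylicRel A x y → F x = F y := by
    intro x y h
    have mk_eq : ∀ u v : FreeMonoid A, StylicRel A u v → (stylCon A).mk' u = (stylCon A).mk' v :=
      fun u v h => (Con.eq _).mpr (ConGen.Rel.of _ _ h)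
    cases h with
    | @knuth1 a b c hab hbc =>
      rw [hFl, hFl]
      congr 1
      exact mk_eq _ _ (StylicRel.knuth2 ((hθ b c).mp hbc) ((hθ a b).mp hab))
    | @knuth2 a b c hab hbc =>
      rw [hFl, hFl]
      congr 1
      exact mk_eq _ _ (StylicRel.knuth1 ((hθ b c).mp hbc) ((hθ a b).mp hab))
    | @knuth3 a b hab =>
      rw [hFl, hFl]
      congr 1
      exact mk_eq _ _ (StylicRel.knuth4 ((hθ a b).mp hab))
    | @knuth4 a b hab =>
      rw [hFl, hFl]
      congr 1
      exact mk_eq _ _ (StylicRel.knuth3 ((hθ a b).mp hab))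
    | idem a =>
      rw [hFl, hFl]
      congr 1
      exact mk_eq _ _ (StylicRel.idem (θ a))
  have hle : stylCon A ≤ Con.ker F := Con.conGen_le.mpr key
  have hG : ∀ l : List A, unop (Con.lift _ F hle ((stylCon A).mk' (ofList l))) =
      (stylCon A).mk' (ofList ((l.map θ).reverse)) := fun l => by
    rw [Con.lift_mk', hFl]
    rfl
  refine ⟨fun x => unop (Con.lift _ F hle x), ?_, ?_, ?_, ?_⟩
  · intro x
    obtain ⟨w, rfl⟩ := Con.mk'_surjective (c := stylCon A) x
    show unop (Con.lift _ F hle (unop (Con.lift _ F hle ((stylCon A).mk' w)))) =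
      (stylCon A).mk' w
    have e1 : (stylCon A).mk' w = (stylCon A).mk' (ofList (toList w)) := rfl
    rw [e1, hG, hG]
    have e2 : (((((toList w).map θ).reverse).map θ).reverse : List A) = toList w := by
      simp [List.map_reverse, List.map_map, Function.comp_def, hθθ]
    rw [e2]
  · intro x y
    simp [map_mul]
  · simp
  · intro a
    show unop (Con.lift _ F hle ((stylCon A).mk' (ofList [a]))) = _
    rw [hG]
    rfl
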